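/- Let A, B be linear operators in a Hilbert space with dom(A) ⊆ dom(B). Assume W_e(A) = ∅ and B is A-form bounded with relative form bound β, i.e., for every β' > β there exists α' ≥ 0 with |⟨Bx,x⟩| ≤ α'‖x‖² + β'|⟨Ax,x⟩| for all x ∈ dom(A). Then w_e(A,B) ⊆ { λ ∈ ℂ : |λ| ≥ 1/β }; in particular, if β = 0 then w_e(A,B) = ∅. -/

import Mathlib

open Filter Topology

variable {H : Type*} [NormedAddCommGroup H] [InnerProductSpace ℂ H] [CompleteSpace H]

/-- The numerical range of (the restriction to the domain `d` of) a linear operator `T`. -/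
def numRange (T : H →ₗ[ℂ] H) (d : Submodule ℂ H) : Set ℂ :=
  {z | ∃ x ∈ d, ‖x‖ = 1 ∧ z = (inner ℂ (T x) x : ℂ)}

/-- The pencil numerical range `W(A,B) = {λ : 0 ∈ closure (W(A - λB))}`. -/
def pencilW (A B : H →ₗ[ℂ] H) (dA : Submodule ℂ H) : Set ℂ :=
  {lam : ℂ | (0 : ℂ) ∈ closure (numRange (A - lam • B) dA)}

/-- The pencil numerical range `w(A,B) = {⟨Ax,x⟩/⟨Bx,x⟩ : x ∈ dom A, ⟨Bx,x⟩ ≠ 0}`. -/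
def pencilw (A B : H →ₗ[ℂ] H) (dA : Submodule ℂ H) : Set ℂ :=
  {lam : ℂ | ∃ x ∈ dA, (inner ℂ (B x) x : ℂ) ≠ 0 ∧
    lam = (inner ℂ (A x) x : ℂ) / (inner ℂ (B x) x : ℂ)}

/-- The essential numerical range of an operator `T` with domain `d`, via weakly null
normalized sequences. -/
def essNumRange (T : H →ₗ[ℂ] H) (d : Submodule ℂ H) : Set ℂ :=
  {z | ∃ x : ℕ → H, (∀ n, x n ∈ d) ∧ (∀ n, ‖x n‖ = 1) ∧
    (∀ y : H, Tendsto (fun n => (inner ℂ y (x n) : ℂ)) atTop (𝓝 0)) ∧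
    Tendsto (fun n => (inner ℂ (T (x n)) (x n) : ℂ)) atTop (𝓝 z)}

/-- The pencil essential numerical range `W_e(A,B) = {λ : 0 ∈ W_e(A - λB)}`. -/
def pencilWe (A B : H →ₗ[ℂ] H) (dA : Submodule ℂ H) : Set ℂ :=
  {lam : ℂ | (0 : ℂ) ∈ essNumRange (A - lam • B) dA}

/-- The pencil essential numerical range `w_e(A,B)`. -/
def pencilwe (A B : H →ₗ[ℂ] H) (dA : Submodule ℂ H) : Set ℂ :=
  {lam : ℂ | ∃ x : ℕ → H, (∀ n, x n ∈ dA) ∧ (∀ n, ‖x n‖ = 1) ∧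
    (∀ y : H, Tendsto (fun n => (inner ℂ y (x n) : ℂ)) atTop (𝓝 0)) ∧
    (∀ n, (inner ℂ (B (x n)) (x n) : ℂ) ≠ 0) ∧
    Tendsto (fun n => (inner ℂ (A (x n)) (x n) : ℂ) / (inner ℂ (B (x n)) (x n) : ℂ))
      atTop (𝓝 lam)}

/-- If `W_e(A) = ∅` and `B` is `A`-form bounded with relative form bound `β`, then
`w_e(A,B) ⊆ {λ : |λ| ≥ 1/β}` (the empty set when `β = 0`). -/

lemma aux_blowup (A : H →ₗ[ℂ] H) (dA : Submodule ℂ H) (hWeA : essNumRange A dA = ∅)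
    (x : ℕ → H) (hm : ∀ n, x n ∈ dA) (hn : ∀ n, ‖x n‖ = 1)
    (hw : ∀ y : H, Tendsto (fun n => (inner ℂ y (x n) : ℂ)) atTop (𝓝 0)) :
    Tendsto (fun n => ‖(inner ℂ (A (x n)) (x n) : ℂ)‖) atTop atTop := by
  by_contra h
  rw [tendsto_atTop] at h
  push_neg at h
  obtain ⟨b, hb⟩ := h
  obtain ⟨φ, hφ, hφb⟩ := Filter.extraction_of_frequently_atTop hb
  have hcpt : IsCompact (Metric.closedBall (0:ℂ) b) := isCompact_closedBall _ _
  have hmem : ∀ n, (inner ℂ (A (x (φ n))) (x (φ n)) : ℂ) ∈ Metric.closedBall (0:ℂ) b := by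
    intro n
    simpa [Metric.mem_closedBall, dist_zero_right] using (hφb n).le
  obtain ⟨z, _, ψ, hψ, hz⟩ := hcpt.tendsto_subseq hmem
  have hz' : z ∈ essNumRange A dA :=
    ⟨fun n => x (φ (ψ n)), fun n => hm _, fun n => hn _,
      fun y => (hw y).comp ((hφ.comp hψ).tendsto_atTop), hz⟩
  rw [hWeA] at hz'
  exact hz'

theorem stmt_11 (A B : H →ₗ[ℂ] H) (dA dB : Submodule ℂ H) (hAB : dA ≤ dB)
    (hWeA : essNumRange A dA = ∅) (β : ℝ) (hβ : 0 ≤ β)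
    (hform : ∀ β' > β, ∃ α' ≥ (0 : ℝ), ∀ x ∈ dA,
      ‖(inner ℂ (B x) x : ℂ)‖ ≤ α' * ‖x‖ ^ 2 + β' * ‖(inner ℂ (A x) x : ℂ)‖) :
    pencilwe A B dA ⊆ {lam : ℂ | 1 ≤ β * ‖lam‖} ∧
      (β = 0 → pencilwe A B dA = ∅) := by
  have main : pencilwe A B dA ⊆ {lam : ℂ | 1 ≤ β * ‖lam‖} := by
    intro lam hlam
    obtain ⟨x, hm, hn, hw, hBne, hlim⟩ := hlam
    set a := fun n => (inner ℂ (A (x n)) (x n) : ℂ) with ha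
    set b := fun n => (inner ℂ (B (x n)) (x n) : ℂ) with hb
    have hblow : Tendsto (fun n => ‖a n‖) atTop atTop := aux_blowup A dA hWeA x hm hn hw
    have key : ∀ β' > β, 1 ≤ β' * ‖lam‖ := by
      intro β' hβ'
      have hβ'pos : 0 < β' := lt_of_le_of_lt hβ hβ'
      obtain ⟨α', hα', hbd⟩ := hform β' hβ'
      have hbB : ∀ n, ‖b n‖ ≤ α' + β' * ‖a n‖ := by
        intro n
        have := hbd (x n) (hm n)
        simpa [hn n] using this
      -- the comparison sequence tends to 1/β'
      have h0 : Tendsto (fun n => α' / ‖a n‖) atTop (𝓝 0) :=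
        Tendsto.div_atTop tendsto_const_nhds hblow
      have h1 : Tendsto (fun n => α' / ‖a n‖ + β') atTop (𝓝 (0 + β')) :=
        h0.add tendsto_const_nhds
      have h2 : Tendsto (fun n => (α' / ‖a n‖ + β')⁻¹) atTop (𝓝 ((0 + β')⁻¹)) :=
        h1.inv₀ (by positivity)
      have heq : ∀ᶠ n in atTop, (α' / ‖a n‖ + β')⁻¹ = ‖a n‖ / (α' + β' * ‖a n‖) := by
        filter_upwards [hblow.eventually_ge_atTop 1] with n hn1
        have hpos : (0:ℝ) < ‖a n‖ := lt_of_lt_of_le one_pos hn1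
        have h3 : α' / ‖a n‖ + β' = (α' + β' * ‖a n‖) / ‖a n‖ :=
          div_add' _ _ _ hpos.ne'
        rw [h3, inv_div]
      have hr : Tendsto (fun n => ‖a n‖ / (α' + β' * ‖a n‖)) atTop (𝓝 (1/β')) := by
        have := h2.congr' heq
        simpa [one_div] using this
      have hq : Tendsto (fun n => ‖a n‖ / ‖b n‖) atTop (𝓝 ‖lam‖) := by
        have := hlim.norm
        simpa [norm_div] using this
      have hle : ∀ n, ‖a n‖ / (α' + β' * ‖a n‖) ≤ ‖a n‖ / ‖b n‖ := by
        intro n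
        have hbpos : 0 < ‖b n‖ := norm_pos_iff.mpr (hBne n)
        exact div_le_div_of_nonneg_left (norm_nonneg _) hbpos (hbB n)
      have hfin : 1 / β' ≤ ‖lam‖ := le_of_tendsto_of_tendsto' hr hq hle
      calc (1:ℝ) = β' * (1 / β') := by field_simp
        _ ≤ β' * ‖lam‖ := by
            exact mul_le_mul_of_nonneg_left hfin hβ'pos.le
    show 1 ≤ β * ‖lam‖
    by_contra hcon
    push_neg at hcon
    rcases eq_or_lt_of_le (norm_nonneg lam) with h0 | h0
    · have := key (β + 1) (lt_add_one β)
      nlinarith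
    · have hβ'gt : β < β + (1 - β * ‖lam‖) / (2 * ‖lam‖) := by
        have : 0 < (1 - β * ‖lam‖) / (2 * ‖lam‖) :=
          div_pos (by linarith) (by linarith)
        linarith
      have := key _ hβ'gt
      have hne : ‖lam‖ ≠ 0 := ne_of_gt h0
      have hne' : ‖lam‖ ≠ 0 := hne
      have hexp : (β + (1 - β * ‖lam‖) / (2 * ‖lam‖)) * ‖lam‖
          = β * ‖lam‖ + (1 - β * ‖lam‖) / 2 := by
        field_simp [hne']
      rw [hexp] at this
      linarith
  refine ⟨main, fun hβ0 => ?_⟩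
  ext lam
  simp only [Set.mem_empty_iff_false, iff_false]
  intro hlam
  have := main hlam
  rw [hβ0] at this
  simp at this
  linarith
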